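/- Let A be an algebra, e ∈ A idempotent, and suppose f, g ∈ eAe with fgf = f. Let S = eAef, a left ideal of eAe. Then the multiplication map μ: Ae ⊗_{eAe} S → Af, ae ⊗ s ↦ aes, is an isomorphism of left A-modules, with inverse ν(x) = x ⊗ gf. -/

import Mathlib

/-!
STATEMENT 2.
`A` a unital algebra (over a field `k`), `e` idempotent, `f, g ∈ eAe` with `fgf = f`
(return condition), and `S = eAe·f` the corresponding left ideal of `eAe`.  The
globalisation `G(S) = Ae ⊗_{eAe} S` is realised as the quotient of `Ae ⊗[k] S` by the
balancing relations `(a·b) ⊗ s − a ⊗ (b·s)` for `b ∈ eAe`.  The multiplication map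
`μ : G(S) → A`, `a ⊗ s ↦ a·s`, is injective with image `Af`, is `A`-equivariant for the
left multiplication action, and its inverse is induced by `ν(x) = x ⊗ gf`.  Thus
`G(S) ≅ Af` as left `A`-modules.
-/

open TensorProduct

section Setup

variable (k A : Type) [Field k] [Ring A] [Algebra k A]

/-- The corner `eAe = {x | e * x * e = x}` as a `k`-submodule of `A`. -/
def cornerSub (e : A) : Submodule k A where
  carrier := {x : A | e * x * e = x}
  add_mem' := by
    intro a b ha hb
    simp only [Set.mem_setOf_eq] at *
    rw [mul_add, add_mul, ha, hb]
  zero_mem' := by simp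
  smul_mem' := by
    intro c x hx
    simp only [Set.mem_setOf_eq] at *
    rw [mul_smul_comm, smul_mul_assoc, hx]

/-- The right ideal `Ae = {x | x * e = x}` as a `k`-submodule of `A`. -/
def aeSub (e : A) : Submodule k A where
  carrier := {x : A | x * e = x}
  add_mem' := by
    intro a b ha hb
    simp only [Set.mem_setOf_eq] at *
    rw [add_mul, ha, hb]
  zero_mem' := by simp
  smul_mem' := by
    intro c x hx
    simp only [Set.mem_setOf_eq] at *
    rw [smul_mul_assoc, hx]

/-- The balancing relations defining `Ae ⊗_{eAe} S` as a quotient of `Ae ⊗[k] S`. -/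
def balRel (e : A) (S : Submodule k A) : Submodule k (aeSub k A e ⊗[k] S) :=
  Submodule.span k {t : aeSub k A e ⊗[k] S |
    ∃ (a ab : aeSub k A e) (b : cornerSub k A e) (s bs : S),
      (ab : A) = (a : A) * (b : A) ∧ (bs : A) = (b : A) * (s : A) ∧
      t = ab ⊗ₜ[k] s - a ⊗ₜ[k] bs}

/-- The globalisation `G(S) = Ae ⊗_{eAe} S`. -/
abbrev Glob (e : A) (S : Submodule k A) : Type :=
  @HasQuotient.Quotient (aeSub k A e ⊗[k] S) (Submodule k (aeSub k A e ⊗[k] S))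
    (@Submodule.hasQuotient k (aeSub k A e ⊗[k] S) _ TensorProduct.addCommGroup _) (balRel k A e S)

/-- Left multiplication by `a' ∈ A` on `Ae`. -/
noncomputable def lmulAe (e a' : A) : aeSub k A e →ₗ[k] aeSub k A e :=
  (LinearMap.mulLeft k a').restrict (p := aeSub k A e) (q := aeSub k A e) (by
    intro x hx
    have hx' : (x : A) * e = x := hx
    simp only [LinearMap.mulLeft_apply]
    show (a' * x) * e = a' * x
    rw [mul_assoc, hx'])

end Setup

theorem stmt2 (k A : Type) [Field k] [Ring A] [Algebra k A]
    (e f g : A) (he : IsIdempotentElem e)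
    (hf : f ∈ cornerSub k A e) (hg : g ∈ cornerSub k A e)
    (hret : f * g * f = f)
    -- `S = eAe f` :
    (S : Submodule k A)
    (hS : S = Submodule.map (LinearMap.mulRight k f) (cornerSub k A e))
    -- `μ` is the multiplication map `G(S) → A`, `a ⊗ s ↦ a s` :
    (μ : Glob k A e S →ₗ[k] A)
    (hμ : ∀ (a : aeSub k A e) (s : S),
      μ (Submodule.Quotient.mk (a ⊗ₜ[k] s)) = (a : A) * (s : A)) :
    -- μ is injective,
    Function.Injective μ ∧
    -- with image the left ideal `Af`,
    LinearMap.range μ = Submodule.map (LinearMap.mulRight k f) (⊤ : Submodule k A) ∧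
    -- μ is a morphism of left A-modules,
    (∀ (a' : A) (t : aeSub k A e ⊗[k] S),
      μ (Submodule.Quotient.mk (TensorProduct.map (lmulAe k A e a') LinearMap.id t))
        = a' * μ (Submodule.Quotient.mk t)) ∧
    -- and its inverse is given explicitly by `ν (x) = x ⊗ g f` :
    (∀ w : Glob k A e S, ∃ (x : aeSub k A e) (s : S),
      (s : A) = g * f ∧ (x : A) = μ w ∧ w = Submodule.Quotient.mk (x ⊗ₜ[k] s)) := by
  subst hS
  have hL : ∀ x : A, e * x * e = x → e * x = x := by
    intro x hx
    conv_lhs => rw [← hx]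
    rw [← mul_assoc, ← mul_assoc, he]
    exact hx
  have hR : ∀ x : A, e * x * e = x → x * e = x := by
    intro x hx
    conv_lhs => rw [← hx]
    rw [mul_assoc, mul_assoc, he, ← mul_assoc]
    exact hx
  have hf' : e * f * e = f := hf
  have hg' : e * g * e = g := hg
  have hfe : f * e = f := hR f hf'
  have hcorner_mul : ∀ b c : A, e * b * e = b → e * c * e = c → e * (b * c) * e = b * c := by
    intro b c hb hc
    rw [← mul_assoc, hL b hb, mul_assoc, hR c hc]
  have hScorner : ∀ s : Submodule.map (LinearMap.mulRight k f) (cornerSub k A e),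
      e * (s : A) * e = (s : A) := by
    rintro ⟨sv, b, hb, rfl⟩
    simp only [LinearMap.mulRight_apply]
    exact hcorner_mul b f hb hf'
  have hsgf : ∀ s : Submodule.map (LinearMap.mulRight k f) (cornerSub k A e),
      (s : A) * (g * f) = (s : A) := by
    rintro ⟨sv, b, hb, rfl⟩
    simp only [LinearMap.mulRight_apply]
    rw [mul_assoc, ← mul_assoc f g f, hret]
  have hmulae : ∀ (a : aeSub k A e) (s : Submodule.map (LinearMap.mulRight k f) (cornerSub k A e)),
      (a : A) * (s : A) ∈ aeSub k A e := by
    intro a s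
    show ((a : A) * (s : A)) * e = (a : A) * (s : A)
    rw [mul_assoc, hR _ (hScorner s)]
  have hgfS : g * f ∈ Submodule.map (LinearMap.mulRight k f) (cornerSub k A e) := ⟨g, hg, rfl⟩
  -- key lemma: a ⊗ s ≡ (a s) ⊗ (g f)
  have key : ∀ (a : aeSub k A e) (s : Submodule.map (LinearMap.mulRight k f) (cornerSub k A e)),
      (Submodule.Quotient.mk (a ⊗ₜ[k] s)
          : Glob k A e (Submodule.map (LinearMap.mulRight k f) (cornerSub k A e)))
        = Submodule.Quotient.mk
            ((⟨(a : A) * (s : A), hmulae a s⟩ : aeSub k A e) ⊗ₜ[k] ⟨g * f, hgfS⟩) := by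
    intro a s
    rw [Submodule.Quotient.eq]
    rw [← neg_sub (α := aeSub k A e ⊗[k] _)]
    refine @Submodule.neg_mem k _ _ TensorProduct.addCommGroup _ (balRel k A e _) _ ?_
    apply Submodule.subset_span
    refine ⟨a, ⟨(a : A) * (s : A), hmulae a s⟩, ⟨(s : A), hScorner s⟩, ⟨g * f, hgfS⟩, s,
      rfl, ?_, rfl⟩
    exact (hsgf s).symm
  -- representation lemma
  have rep : ∀ t : aeSub k A e ⊗[k] (Submodule.map (LinearMap.mulRight k f) (cornerSub k A e)),
      ∃ x : aeSub k A e,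
      (x : A) = μ (Submodule.Quotient.mk t) ∧
      (Submodule.Quotient.mk t
          : Glob k A e (Submodule.map (LinearMap.mulRight k f) (cornerSub k A e)))
        = Submodule.Quotient.mk (x ⊗ₜ[k] ⟨g * f, hgfS⟩) := by
    intro t
    induction t using TensorProduct.induction_on with
    | zero =>
      refine ⟨0, ?_, ?_⟩
      · simp
      · simp [TensorProduct.zero_tmul]
    | tmul a s =>
      exact ⟨⟨(a : A) * (s : A), hmulae a s⟩, (hμ a s).symm, key a s⟩
    | add t1 t2 ih1 ih2 =>
      obtain ⟨x1, hx1, hx1'⟩ := ih1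
      obtain ⟨x2, hx2, hx2'⟩ := ih2
      refine ⟨x1 + x2, ?_, ?_⟩
      · push_cast
        rw [hx1, hx2, Submodule.Quotient.mk_add, map_add]
      · rw [Submodule.Quotient.mk_add, hx1', hx2', TensorProduct.add_tmul,
          Submodule.Quotient.mk_add]
  have hzero : ∀ w : Glob k A e (Submodule.map (LinearMap.mulRight k f) (cornerSub k A e)),
      μ w = 0 → w = 0 := by
    intro w hw
    obtain ⟨t, rfl⟩ := Submodule.Quotient.mk_surjective _ w
    obtain ⟨x, hx, hx'⟩ := rep t
    have hx0 : x = 0 := Subtype.ext (by rw [hx, hw]; rfl)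
    rw [hx', hx0, TensorProduct.zero_tmul, Submodule.Quotient.mk_zero]
  refine ⟨?_, ?_, ?_, ?_⟩
  · -- injectivity
    intro w1 w2 h
    have := hzero (w1 - w2) (by rw [map_sub, h, sub_self])
    exact sub_eq_zero.mp this
  · -- range
    ext y
    constructor
    · rintro ⟨w, rfl⟩
      obtain ⟨t, rfl⟩ := Submodule.Quotient.mk_surjective _ w
      obtain ⟨x, hx, hx'⟩ := rep t
      refine ⟨(x : A) * g, trivial, ?_⟩
      simp only [LinearMap.mulRight_apply]
      rw [mul_assoc, hx, hx', hμ x ⟨g * f, hgfS⟩, mul_assoc, hsgf ⟨g * f, hgfS⟩]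
    · rintro ⟨a, -, rfl⟩
      simp only [LinearMap.mulRight_apply]
      have hafe : a * f ∈ aeSub k A e := by
        show (a * f) * e = a * f
        rw [mul_assoc, hfe]
      refine ⟨Submodule.Quotient.mk ((⟨a * f, hafe⟩ : aeSub k A e) ⊗ₜ[k] ⟨g * f, hgfS⟩), ?_⟩
      rw [hμ]
      show (a * f) * (g * f) = a * f
      rw [mul_assoc, ← mul_assoc f g f, hret]
  · -- equivariance
    intro a' t
    have hlmul : ∀ a : aeSub k A e, ((lmulAe k A e a' a : aeSub k A e) : A) = a' * (a : A) := by
      intro a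
      simp [lmulAe, LinearMap.restrict_apply]
    induction t using TensorProduct.induction_on with
    | zero => simp
    | tmul a s =>
      rw [TensorProduct.map_tmul, LinearMap.id_coe, id_eq, hμ, hμ, hlmul, mul_assoc]
    | add t1 t2 ih1 ih2 =>
      rw [map_add, Submodule.Quotient.mk_add, map_add, ih1, ih2,
        Submodule.Quotient.mk_add, map_add, mul_add]
  · -- inverse
    intro w
    obtain ⟨t, rfl⟩ := Submodule.Quotient.mk_surjective _ w
    obtain ⟨x, hx, hx'⟩ := rep t
    exact ⟨x, ⟨g * f, hgfS⟩, rfl, hx, hx'⟩
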